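/- Let {g_i} be a general pre-F-frame for X_F with respect to Θ_F, where Θ_s are CB-spaces. The following are equivalent: (i) there exists a continuous operator V : Θ_F → X_F with V{g_i(f)} = f for all f ∈ X_F; (ii) there exists {f_i} ⊂ X_F such that Σ c_i f_i converges in X_F for every {c_i} ∈ Θ_F and f = Σ g_i(f) f_i for every f ∈ X_F. -/

import Mathlib

open Filter Finset

/-- The `i`-th canonical sequence vector. -/
def e (i : ℕ) : ℕ → ℝ := fun j => if j = i then 1 else 0

/-- Truncation of a sequence to its first `n` coordinates. -/
def trunc (n : ℕ) (c : ℕ → ℝ) : ℕ → ℝ := fun j => if j < n then c j else 0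

/-- `N` is a norm on the real vector space `V`. -/
def IsNormOn {V : Type*} [AddCommGroup V] [Module ℝ V] (N : V → ℝ) : Prop :=
  (∀ x, 0 ≤ N x) ∧ (∀ x y, N (x + y) ≤ N x + N y) ∧
  (∀ (a : ℝ) (x : V), N (a • x) = |a| * N x) ∧ ∀ x, N x = 0 → x = 0


section Aux
variable {V : Type*} [AddCommGroup V] [Module ℝ V] {N : V → ℝ}

lemma isnorm_zero (h : IsNormOn N) : N 0 = 0 := by
  have := h.2.2.1 0 0
  simpa using this

lemma isnorm_neg (h : IsNormOn N) (x : V) : N (-x) = N x := by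
  have := h.2.2.1 (-1) x
  simpa using this

lemma isnorm_sub_le (h : IsNormOn N) (x y : V) : N (x - y) ≤ N x + N y := by
  have := h.2.1 x (-y)
  rw [isnorm_neg h y] at this
  simpa [sub_eq_add_neg] using this

lemma isnorm_le_add (h : IsNormOn N) (x y : V) : N x ≤ N y + N (x - y) := by
  have := h.2.1 y (x - y)
  simpa using this

lemma isnorm_eq_zero_of_sub (h : IsNormOn N) {x y : V} (hxy : N (x - y) = 0) : x = y := by
  have := h.2.2.2 _ hxy
  exact sub_eq_zero.mp this


lemma isnorm_sum_le {V : Type*} [AddCommGroup V] [Module ℝ V] {N : V → ℝ}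
    (h : IsNormOn N) {ι : Type*} (s : Finset ι) (f : ι → V) :
    N (∑ i ∈ s, f i) ≤ ∑ i ∈ s, N (f i) := by
  classical
  induction s using Finset.induction with
  | empty => simp [isnorm_zero h]
  | insert _ _ hx ih =>
    rw [Finset.sum_insert hx, Finset.sum_insert hx]
    exact ((h.2.1 _ _).trans (by linarith))

end Aux

/-- translation-invariant pre-distance from a family of norms -/
noncomputable def Dd (nT : ℕ → (ℕ → ℝ) → ℝ) (x : ℕ → ℝ) : ℝ :=
  ∑' t, (1/2 : ℝ)^t * min 1 (nT t x)

section Dd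
variable {nT : ℕ → (ℕ → ℝ) → ℝ}

lemma Dd_term_nonneg (hnT : ∀ t, IsNormOn (nT t)) (x : ℕ → ℝ) (t : ℕ) :
    0 ≤ (1/2 : ℝ)^t * min 1 (nT t x) := by
  apply mul_nonneg (by positivity)
  exact le_min one_pos.le ((hnT t).1 x)

lemma Dd_term_le (x : ℕ → ℝ) (t : ℕ) : (1/2 : ℝ)^t * min 1 (nT t x) ≤ (1/2 : ℝ)^t := by
  have : min 1 (nT t x) ≤ 1 := min_le_left _ _
  nlinarith [pow_pos (by norm_num : (0:ℝ) < 1/2) t]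

lemma Dd_summable (hnT : ∀ t, IsNormOn (nT t)) (x : ℕ → ℝ) :
    Summable (fun t => (1/2 : ℝ)^t * min 1 (nT t x)) :=
  Summable.of_nonneg_of_le (Dd_term_nonneg hnT x) (Dd_term_le x)
    (summable_geometric_of_lt_one (by norm_num) (by norm_num))

lemma Dd_nonneg (hnT : ∀ t, IsNormOn (nT t)) (x : ℕ → ℝ) : 0 ≤ Dd nT x :=
  tsum_nonneg (Dd_term_nonneg hnT x)

lemma min_one_add_le {a b : ℝ} (ha : 0 ≤ a) (hb : 0 ≤ b) :
    min 1 (a + b) ≤ min 1 a + min 1 b := by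
  rcases le_or_gt 1 a with h | h
  · have h2 : min 1 a = 1 := min_eq_left h
    calc min 1 (a+b) ≤ 1 := min_le_left _ _
    _ ≤ min 1 a + min 1 b := by rw [h2]; nlinarith [le_min one_pos.le hb]
  rcases le_or_gt 1 b with h' | h'
  · have h2 : min 1 b = 1 := min_eq_left h'
    calc min 1 (a+b) ≤ 1 := min_le_left _ _
    _ ≤ min 1 a + min 1 b := by rw [h2]; nlinarith [le_min one_pos.le ha]
  · calc min 1 (a+b) ≤ a + b := min_le_right _ _
    _ ≤ min 1 a + min 1 b := by rw [min_eq_right h.le, min_eq_right h'.le]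

lemma Dd_triangle (hnT : ∀ t, IsNormOn (nT t)) (x y : ℕ → ℝ) :
    Dd nT (x + y) ≤ Dd nT x + Dd nT y := by
  rw [Dd, Dd, Dd, ← Summable.tsum_add (Dd_summable hnT x) (Dd_summable hnT y)]
  apply Summable.tsum_le_tsum _ (Dd_summable hnT _)
    ((Dd_summable hnT x).add (Dd_summable hnT y))
  intro t
  have h1 : min 1 (nT t (x + y)) ≤ min 1 (nT t x + nT t y) :=
    min_le_min le_rfl ((hnT t).2.1 x y)
  calc (1/2:ℝ)^t * min 1 (nT t (x+y)) ≤ (1/2:ℝ)^t * (min 1 (nT t x) + min 1 (nT t y)) := by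
        apply mul_le_mul_of_nonneg_left _ (by positivity)
        exact h1.trans (min_one_add_le ((hnT t).1 x) ((hnT t).1 y))
  _ = (1/2:ℝ)^t * min 1 (nT t x) + (1/2:ℝ)^t * min 1 (nT t y) := by ring

lemma Dd_neg (hnT : ∀ t, IsNormOn (nT t)) (x : ℕ → ℝ) : Dd nT (-x) = Dd nT x := by
  unfold Dd
  exact tsum_congr fun t => by rw [isnorm_neg (hnT t) x]

lemma term_le_Dd (hnT : ∀ t, IsNormOn (nT t)) (x : ℕ → ℝ) (t : ℕ) :
    (1/2:ℝ)^t * min 1 (nT t x) ≤ Dd nT x :=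
  Summable.le_tsum (Dd_summable hnT x) t (fun j _ => Dd_term_nonneg hnT x j)

lemma Dd_eq_zero_imp (hnT : ∀ t, IsNormOn (nT t)) (x : ℕ → ℝ) (h : Dd nT x = 0) : x = 0 := by
  have h0 : (1/2:ℝ)^0 * min 1 (nT 0 x) ≤ 0 := h ▸ term_le_Dd hnT x 0
  simp only [pow_zero, one_mul] at h0
  have hge : 0 ≤ min 1 (nT 0 x) := le_min one_pos.le ((hnT 0).1 x)
  have hmin : min 1 (nT 0 x) = 0 := le_antisymm h0 hge
  have h2 : nT 0 x = 0 := by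
    rcases min_eq_iff.mp hmin with ⟨h1, _⟩ | ⟨h1, _⟩
    · norm_num at h1
    · exact h1
  exact (hnT 0).2.2.2 x h2


lemma Dd_zero (hnT : ∀ t, IsNormOn (nT t)) : Dd nT (0 : ℕ → ℝ) = 0 := by
  unfold Dd
  have h : ∀ t, (1/2:ℝ)^t * min 1 (nT t 0) = 0 := by
    intro t
    rw [isnorm_zero (hnT t)]
    simp
  simp only [h, tsum_zero]

/-- if `nT p` is small then `Dd` is small -/
lemma Dd_le_bound (hnT : ∀ t, IsNormOn (nT t))
    (hmono : ∀ ⦃t p : ℕ⦄, t ≤ p → ∀ c, nT t c ≤ nT p c)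
    (x : ℕ → ℝ) (p : ℕ) : Dd nT x ≤ 2 * nT p x + (1/2:ℝ)^p := by
  have hsum := Dd_summable hnT x
  set f := fun t => (1/2:ℝ)^t * min 1 (nT t x) with hf
  have hsplit := Summable.sum_add_tsum_nat_add (f := f) (p+1) hsum
  have h1 : ∑ t ∈ range (p+1), f t ≤ 2 * nT p x := by
    have hb : ∀ t ∈ range (p+1), f t ≤ (1/2:ℝ)^t * nT p x := by
      intro t ht
      simp only [hf]
      apply mul_le_mul_of_nonneg_left _ (by positivity)
      exact (min_le_right _ _).trans (hmono (Nat.lt_succ_iff.mp (mem_range.mp ht)) x)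
    calc ∑ t ∈ range (p+1), f t ≤ ∑ t ∈ range (p+1), (1/2:ℝ)^t * nT p x :=
          Finset.sum_le_sum hb
    _ = (∑ t ∈ range (p+1), (1/2:ℝ)^t) * nT p x := by rw [Finset.sum_mul]
    _ ≤ 2 * nT p x := mul_le_mul_of_nonneg_right (sum_geometric_two_le _) ((hnT p).1 x)
  have h2 : ∑' i, f (i + (p+1)) ≤ (1/2:ℝ)^p := by
    have hle : ∀ i, f (i + (p+1)) ≤ (1/2:ℝ)^(i+(p+1)) := fun i => Dd_term_le x _
    have hs2 : Summable (fun i => (1/2:ℝ)^(i+(p+1))) := by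
      simpa [pow_add] using (summable_geometric_of_lt_one (r := (1/2:ℝ)) (by norm_num)
        (by norm_num)).mul_right ((1/2:ℝ)^(p+1))
    calc ∑' i, f (i + (p+1)) ≤ ∑' i, (1/2:ℝ)^(i+(p+1)) := by
          apply Summable.tsum_le_tsum hle _ hs2
          exact (summable_nat_add_iff (p+1)).mpr hsum
    _ = 2 * (1/2:ℝ)^(p+1) := by
          simp only [pow_add]
          rw [tsum_mul_right, tsum_geometric_two]
    _ = (1/2:ℝ)^p := by ring
  have : Dd nT x = ∑ t ∈ range (p+1), f t + ∑' i, f (i + (p+1)) := hsplit.symm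
  rw [Dd] at this ⊢
  linarith [this, h1, h2]

/-- if `Dd` is small then `nT t` is small -/
lemma nT_lt_of_Dd_lt (hnT : ∀ t, IsNormOn (nT t)) {x : ℕ → ℝ} {t : ℕ} {ε : ℝ} (hε : 0 < ε)
    (h : Dd nT x < (1/2:ℝ)^t * min 1 ε) : nT t x < ε := by
  have h0 := term_le_Dd hnT x t
  have hlt : min 1 (nT t x) < min 1 ε := by
    have hp : (0:ℝ) < (1/2:ℝ)^t := by positivity
    nlinarith [h0, h]
  have hlt1 : min 1 (nT t x) < 1 := hlt.trans_le (min_le_left _ _)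
  have : min 1 (nT t x) = nT t x := by
    rcases le_or_gt (nT t x) 1 with h' | h'
    · exact min_eq_right h'
    · exfalso; rw [min_eq_left h'.le] at hlt1; exact lt_irrefl _ hlt1
  rw [this] at hlt
  exact hlt.trans_le (min_le_right _ _)

end Dd

/-- wrapper type for `Θ_F`, carrying no ambient instances -/
structure ThetaF (memT : ℕ → (ℕ → ℝ) → Prop) : Type where
  val : ℕ → ℝ
  mem : ∀ t, memT t val

theorem ThetaF.ext' {memT : ℕ → (ℕ → ℝ) → Prop} {a b : ThetaF memT}
    (h : a.val = b.val) : a = b := by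
  cases a; cases b; simpa using h

set_option maxHeartbeats 2000000 in
/-- (Theorem equivcompl, (i) ⇔ (ii).) For a general pre-F-frame with the
`Θ_s` CB-spaces: there is a continuous `V : Θ_F → X_F` with `V{g_i(f)} = f` iff there
is `{f_i} ⊂ X_F` such that `Σ c_i f_i` converges in `X_F` for every `{c_i} ∈ Θ_F` and
`f = Σ g_i(f) f_i` for every `f ∈ X_F`. -/
theorem statement12
    {X : Type*} [AddCommGroup X] [Module ℝ X]
    -- `X_F` with its increasing family of norms `‖·‖_s`
    (nX : ℕ → X → ℝ) (hnX : ∀ t, IsNormOn (nX t))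
    (hXmono : ∀ t f, nX t f ≤ nX (t + 1) f)
    -- the Fréchet sequence space `Θ_F = ⋂ Θ_s`, each `Θ_s` a BK-space
    (memT : ℕ → (ℕ → ℝ) → Prop) (nT : ℕ → (ℕ → ℝ) → ℝ)
    (hnT : ∀ t, IsNormOn (nT t))
    (hTmono : ∀ t c, nT t c ≤ nT (t + 1) c)
    (hTnest : ∀ t c, memT (t + 1) c → memT t c)
    (hT0 : ∀ t, memT t 0) (hTadd : ∀ t c d, memT t c → memT t d → memT t (c + d))
    (hTsmul : ∀ t (a : ℝ) c, memT t c → memT t (a • c))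
    (hBK : ∀ t i, ∃ K, ∀ c, memT t c → |c i| ≤ K * nT t c)
    -- `{g_i}` is a general pre-F-frame for `X_F` w.r.t. `Θ_F`
    (g : ℕ → X →ₗ[ℝ] ℝ) (s st : ℕ → ℕ)
    (hs : Monotone s) (hstend : Tendsto s atTop atTop)
    (hst : Monotone st) (hsttend : Tendsto st atTop atTop)
    (hsle : ∀ k, s k ≤ st k)
    (A B : ℕ → ℝ) (hA : ∀ k, 0 < A k) (hB : ∀ k, 0 < B k)
    (hframe : ∀ f : X, (∀ t, memT t (fun i => g i f)) ∧
      ∀ k, A k * nX (s k) f ≤ nT k (fun i => g i f) ∧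
        nT k (fun i => g i f) ≤ B k * nX (st k) f)
    -- `Θ_F` is a Fréchet space (complete) and the `Θ_s` are CB-spaces
    (hTFcomplete : ∀ u : ℕ → (ℕ → ℝ), (∀ n t, memT t (u n)) →
      (∀ t, ∀ ε > 0, ∃ N, ∀ m ≥ N, ∀ n ≥ N, nT t (u m - u n) < ε) →
      ∃ c, (∀ t, memT t c) ∧ ∀ t, Tendsto (fun n => nT t (u n - c)) atTop (nhds 0))
    (hTe : ∀ t i, memT t (e i))
    (hCB : ∀ t c, memT t c → Tendsto (fun n => nT t (c - trunc n c)) atTop (nhds 0)) :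
    -- (i) a continuous operator `V : Θ_F → X_F` with `V{g_i(f)} = f`
    (∃ V : (ℕ → ℝ) →ₗ[ℝ] X,
       (∀ f : X, V (fun i => g i f) = f) ∧
       (∀ k, ∃ p, ∃ C > 0, ∀ c, (∀ t, memT t c) → nX k (V c) ≤ C * nT p c))
    ↔
    -- (ii) a sequence `{f_i}` with convergent synthesis series and reconstruction
    (∃ fseq : ℕ → X,
       (∀ c, (∀ t, memT t c) → ∃ x : X, ∀ t, Tendsto
         (fun n => nX t (x - ∑ i ∈ Finset.range n, c i • fseq i)) atTop (nhds 0)) ∧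
       (∀ f : X, ∀ t, Tendsto
         (fun n => nX t (f - ∑ i ∈ Finset.range n, g i f • fseq i)) atTop (nhds 0))) := by
  constructor
  · -- (i) ⇒ (ii)
    rintro ⟨V, hVrec, hVb⟩
    have trunc_eq : ∀ (n : ℕ) (c : ℕ → ℝ), trunc n c = ∑ i ∈ Finset.range n, c i • e i := by
      intro n c
      funext j
      simp only [trunc, Finset.sum_apply, Pi.smul_apply, e, smul_eq_mul, mul_ite, mul_one,
        mul_zero, Finset.sum_ite_eq, Finset.mem_range]
    have memT_trunc : ∀ t n c, memT t (trunc n c) := by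
      intro t n c
      rw [trunc_eq]
      induction n with
      | zero => simpa using hT0 t
      | succ m ih =>
        rw [Finset.sum_range_succ]
        exact hTadd t _ _ ih (hTsmul t _ _ (hTe t m))
    have memT_sub : ∀ t (c : ℕ → ℝ) n, (∀ t', memT t' c) → memT t (c - trunc n c) := by
      intro t c n hc
      have h := hTadd t c ((-1:ℝ) • trunc n c) (hc t) (hTsmul t (-1) _ (memT_trunc t n c))
      simpa [sub_eq_add_neg] using h
    have key : ∀ (c : ℕ → ℝ), (∀ t, memT t c) → ∀ t,
        Tendsto (fun n => nX t (V c - ∑ i ∈ Finset.range n, c i • V (e i))) atTop (nhds 0) := by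
      intro c hc t
      obtain ⟨p, C, hC, hCb⟩ := hVb t
      have heq : ∀ n, V c - ∑ i ∈ Finset.range n, c i • V (e i) = V (c - trunc n c) := by
        intro n
        rw [map_sub, trunc_eq, map_sum]
        simp only [map_smul]
      refine squeeze_zero (g := fun n => C * nT p (c - trunc n c)) (fun n => (hnX t).1 _)
        (fun n => ?_) ?_
      · rw [heq]
        exact hCb _ (fun t' => memT_sub t' c n hc)
      · simpa using (hCB p c (hc p)).const_mul C
    refine ⟨fun i => V (e i), fun c hc => ⟨V c, fun t => by simpa using key c hc t⟩,
      fun f t => ?_⟩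
    have h := key (fun i => g i f) (hframe f).1 t
    rw [hVrec f] at h
    simpa using h
  · -- (ii) ⇒ (i)
    rintro ⟨fseq, hconv, hrecon⟩
    classical
    have hmonoT : ∀ ⦃t p : ℕ⦄, t ≤ p → ∀ c, nT t c ≤ nT p c := by
      intro t p h c
      induction p, h using Nat.le_induction with
      | base => exact le_rfl
      | succ q hq ih => exact ih.trans (hTmono q c)
    have memT_sub2 : ∀ t (a b : ℕ → ℝ), memT t a → memT t b → memT t (a - b) := by
      intro t a b ha hb
      have h := hTadd t a ((-1:ℝ) • b) ha (hTsmul t (-1) b hb)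
      simpa [sub_eq_add_neg] using h
    have uniq : ∀ (c : ℕ → ℝ) (x y : X),
        (∀ t, Tendsto (fun n => nX t (x - ∑ i ∈ Finset.range n, c i • fseq i)) atTop (nhds 0)) →
        (∀ t, Tendsto (fun n => nX t (y - ∑ i ∈ Finset.range n, c i • fseq i)) atTop (nhds 0)) →
        x = y := by
      intro c x y hx hy
      have h1 : ∀ n, nX 0 (x - y) ≤ nX 0 (x - ∑ i ∈ Finset.range n, c i • fseq i) +
          nX 0 (y - ∑ i ∈ Finset.range n, c i • fseq i) := by
        intro n
        have h := isnorm_sub_le (hnX 0) (x - ∑ i ∈ Finset.range n, c i • fseq i)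
          (y - ∑ i ∈ Finset.range n, c i • fseq i)
        simpa [sub_sub_sub_cancel_right] using h
      have h2 : Tendsto (fun n => nX 0 (x - ∑ i ∈ Finset.range n, c i • fseq i) +
          nX 0 (y - ∑ i ∈ Finset.range n, c i • fseq i)) atTop (nhds 0) := by
        simpa using (hx 0).add (hy 0)
      have h3 : nX 0 (x - y) ≤ 0 := ge_of_tendsto' h2 h1
      exact isnorm_eq_zero_of_sub (hnX 0) (le_antisymm h3 ((hnX 0).1 _))
    set L : (ℕ → ℝ) → X :=
      fun c => if h : ∀ t, memT t c then Classical.choose (hconv c h) else 0 with hLdef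
    have Lspec : ∀ (c : ℕ → ℝ) (h : ∀ t, memT t c), ∀ t,
        Tendsto (fun n => nX t (L c - ∑ i ∈ Finset.range n, c i • fseq i)) atTop (nhds 0) := by
      intro c h t
      simp only [hLdef, dif_pos h]
      exact Classical.choose_spec (hconv c h) t
    let P : Submodule ℝ (ℕ → ℝ) :=
      { carrier := {c | ∀ t, memT t c}
        add_mem' := fun ha hb t => hTadd t _ _ (ha t) (hb t)
        zero_mem' := fun t => hT0 t
        smul_mem' := fun a c hc t => hTsmul t a c (hc t) }
    have Ssum_add : ∀ (c d : ℕ → ℝ) (n : ℕ),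
        (∑ i ∈ Finset.range n, (c + d) i • fseq i) =
          (∑ i ∈ Finset.range n, c i • fseq i) + ∑ i ∈ Finset.range n, d i • fseq i := by
      intro c d n
      rw [← Finset.sum_add_distrib]
      exact Finset.sum_congr rfl fun i _ => by simp [add_smul]
    have Ssum_smul : ∀ (a : ℝ) (c : ℕ → ℝ) (n : ℕ),
        (∑ i ∈ Finset.range n, (a • c) i • fseq i) =
          a • ∑ i ∈ Finset.range n, c i • fseq i := by
      intro a c n
      rw [Finset.smul_sum]
      exact Finset.sum_congr rfl fun i _ => by simp [smul_smul]
    let V₀ : P →ₗ[ℝ] X :=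
      { toFun := fun c => L c.1
        map_add' := by
          rintro ⟨c, hc⟩ ⟨d, hd⟩
          show L (c + d) = L c + L d
          refine uniq (c + d) _ _ (Lspec _ (fun t => hTadd t _ _ (hc t) (hd t))) ?_
          intro t
          refine squeeze_zero
            (g := fun n => nX t (L c - ∑ i ∈ Finset.range n, c i • fseq i) +
              nX t (L d - ∑ i ∈ Finset.range n, d i • fseq i))
            (fun n => (hnX t).1 _) (fun n => ?_) ?_
          · rw [Ssum_add]
            have heq : L c + L d - ((∑ i ∈ Finset.range n, c i • fseq i) +
                ∑ i ∈ Finset.range n, d i • fseq i) =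
                (L c - ∑ i ∈ Finset.range n, c i • fseq i) +
                (L d - ∑ i ∈ Finset.range n, d i • fseq i) := by abel
            rw [heq]
            exact (hnX t).2.1 _ _
          · simpa using (Lspec c hc t).add (Lspec d hd t)
        map_smul' := by
          rintro a ⟨c, hc⟩
          show L (a • c) = a • L c
          refine uniq (a • c) _ _ (Lspec _ (fun t => hTsmul t a c (hc t))) ?_
          intro t
          refine squeeze_zero
            (g := fun n => |a| * nX t (L c - ∑ i ∈ Finset.range n, c i • fseq i))
            (fun n => (hnX t).1 _) (fun n => ?_) ?_
          · rw [Ssum_smul, ← smul_sub, (hnX t).2.2.1]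
          · simpa using (Lspec c hc t).const_mul |a| }
    obtain ⟨V, hV⟩ := LinearMap.exists_extend V₀
    have hVP : ∀ (c : ℕ → ℝ) (h : ∀ t, memT t c), V c = L c := by
      intro c h
      have h2 := LinearMap.congr_fun hV (⟨c, h⟩ : P)
      exact h2
    have hVrec : ∀ f : X, V (fun i => g i f) = f := by
      intro f
      rw [hVP _ (hframe f).1]
      exact uniq _ _ _ (Lspec _ (hframe f).1) (fun t => hrecon f t)
    refine ⟨V, hVrec, ?_⟩
    intro k
    letI instE : MetricSpace (ThetaF memT) :=
      { dist := fun a b => Dd nT (a.1 - b.1)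
        dist_self := fun a => by
          show Dd nT (a.1 - a.1) = 0
          rw [sub_self, Dd_zero hnT]
        dist_comm := fun a b => by
          show Dd nT (a.1 - b.1) = Dd nT (b.1 - a.1)
          rw [← neg_sub b.1 a.1, Dd_neg hnT]
        dist_triangle := fun a b c => by
          show Dd nT (a.1 - c.1) ≤ Dd nT (a.1 - b.1) + Dd nT (b.1 - c.1)
          have h := Dd_triangle hnT (a.1 - b.1) (b.1 - c.1)
          rwa [sub_add_sub_cancel] at h
        eq_of_dist_eq_zero := fun {a b} h =>
          ThetaF.ext' (sub_eq_zero.mp (Dd_eq_zero_imp hnT _ h)) }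
    haveI : CompleteSpace (ThetaF memT) := by
      apply Metric.complete_of_cauchySeq_tendsto
      intro u hu
      have hCau : ∀ t, ∀ ε > 0, ∃ N, ∀ m ≥ N, ∀ n' ≥ N,
          nT t ((fun n => (u n).1) m - (fun n => (u n).1) n') < ε := by
        intro t ε hε
        have hδ : (0:ℝ) < (1/2:ℝ)^t * min 1 ε :=
          mul_pos (by positivity) (lt_min one_pos hε)
        obtain ⟨N, hN⟩ := Metric.cauchySeq_iff.mp hu ((1/2:ℝ)^t * min 1 ε) hδ
        exact ⟨N, fun m hm n' hn' => nT_lt_of_Dd_lt hnT hε (hN m hm n' hn')⟩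
      obtain ⟨c, hcmem, hcconv⟩ := hTFcomplete (fun n => (u n).1) (fun n t => (u n).2 t) hCau
      refine ⟨⟨c, hcmem⟩, Metric.tendsto_atTop.mpr fun ε hε => ?_⟩
      obtain ⟨p, hp⟩ := exists_pow_lt_of_lt_one (show (0:ℝ) < ε/2 by linarith)
        (show (1/2:ℝ) < 1 by norm_num)
      have hev := (hcconv p).eventually_lt_const (show (0:ℝ) < ε/8 by linarith)
      obtain ⟨N, hN⟩ := eventually_atTop.mp hev
      refine ⟨N, fun n hn => ?_⟩
      have h3 : nT p ((u n).1 - c) < ε/8 := hN n hn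
      have h2 := Dd_le_bound hnT hmonoT ((u n).1 - c) p
      show Dd nT ((u n).1 - c) < ε
      linarith
    choose K hK using fun i => hBK 0 i
    have hcont : ∀ N : ℕ, Continuous (fun c : ThetaF memT =>
        nX k (∑ i ∈ Finset.range N, c.1 i • fseq i)) := by
      intro N
      rw [Metric.continuous_iff]
      intro b ε hε
      set M : ℝ := (∑ i ∈ Finset.range N, |K i| * nX k (fseq i)) + 1 with hM
      have hM1 : 0 ≤ ∑ i ∈ Finset.range N, |K i| * nX k (fseq i) :=
        Finset.sum_nonneg fun i _ => mul_nonneg (abs_nonneg _) ((hnX k).1 _)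
      have hM0 : 0 < M := by linarith
      have hεM : 0 < ε / M := by positivity
      refine ⟨min 1 (ε/M), lt_min one_pos hεM, fun a hab => ?_⟩
      have hab' : Dd nT (a.1 - b.1) < (1/2:ℝ)^0 * min 1 (ε/M) := by
        have hab2 : Dd nT (a.1 - b.1) < min 1 (ε/M) := hab
        simpa using hab2
      have h1 : nT 0 (a.1 - b.1) < ε/M := nT_lt_of_Dd_lt hnT hεM hab'
      have hmem0 : memT 0 (a.1 - b.1) := memT_sub2 0 _ _ (a.2 0) (b.2 0)
      have hdiff : ∀ i, |a.1 i - b.1 i| ≤ |K i| * nT 0 (a.1 - b.1) := by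
        intro i
        have h2 : |(a.1 - b.1) i| ≤ K i * nT 0 (a.1 - b.1) := hK i _ hmem0
        have h3 : |(a.1 - b.1) i| = |a.1 i - b.1 i| := rfl
        calc |a.1 i - b.1 i| ≤ K i * nT 0 (a.1 - b.1) := h3 ▸ h2
        _ ≤ |K i| * nT 0 (a.1 - b.1) :=
            mul_le_mul_of_nonneg_right (le_abs_self _) ((hnT 0).1 _)
      have hSdiff : (∑ i ∈ Finset.range N, a.1 i • fseq i) -
          (∑ i ∈ Finset.range N, b.1 i • fseq i) =
          ∑ i ∈ Finset.range N, (a.1 i - b.1 i) • fseq i := by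
        rw [← Finset.sum_sub_distrib]
        exact Finset.sum_congr rfl fun i _ => (sub_smul _ _ _).symm
      have hkey : |nX k (∑ i ∈ Finset.range N, a.1 i • fseq i) -
          nX k (∑ i ∈ Finset.range N, b.1 i • fseq i)| ≤
          nX k ((∑ i ∈ Finset.range N, a.1 i • fseq i) -
            ∑ i ∈ Finset.range N, b.1 i • fseq i) := by
        rw [abs_sub_le_iff]
        constructor
        · have h := isnorm_le_add (hnX k) (∑ i ∈ Finset.range N, a.1 i • fseq i)
            (∑ i ∈ Finset.range N, b.1 i • fseq i)
          linarith
        · have h := isnorm_le_add (hnX k) (∑ i ∈ Finset.range N, b.1 i • fseq i)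
            (∑ i ∈ Finset.range N, a.1 i • fseq i)
          have h2 : nX k ((∑ i ∈ Finset.range N, b.1 i • fseq i) -
              ∑ i ∈ Finset.range N, a.1 i • fseq i) =
              nX k ((∑ i ∈ Finset.range N, a.1 i • fseq i) -
                ∑ i ∈ Finset.range N, b.1 i • fseq i) := by
            rw [← isnorm_neg (hnX k), neg_sub]
          linarith
      have h4 : nX k (∑ i ∈ Finset.range N, (a.1 i - b.1 i) • fseq i) ≤
          ∑ i ∈ Finset.range N, |a.1 i - b.1 i| * nX k (fseq i) := by
        refine (isnorm_sum_le (hnX k) _ _).trans ?_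
        refine Finset.sum_le_sum fun i _ => ?_
        rw [(hnX k).2.2.1]
      have h5 : ∑ i ∈ Finset.range N, |a.1 i - b.1 i| * nX k (fseq i) ≤
          (M - 1) * nT 0 (a.1 - b.1) := by
        have hterm : ∀ i ∈ Finset.range N, |a.1 i - b.1 i| * nX k (fseq i) ≤
            (|K i| * nX k (fseq i)) * nT 0 (a.1 - b.1) := by
          intro i _
          have h6 := mul_le_mul_of_nonneg_right (hdiff i) ((hnX k).1 (fseq i))
          nlinarith [(hnX k).1 (fseq i), (hnT 0).1 (a.1 - b.1)]
        calc ∑ i ∈ Finset.range N, |a.1 i - b.1 i| * nX k (fseq i)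
            ≤ ∑ i ∈ Finset.range N, (|K i| * nX k (fseq i)) * nT 0 (a.1 - b.1) :=
              Finset.sum_le_sum hterm
        _ = (∑ i ∈ Finset.range N, |K i| * nX k (fseq i)) * nT 0 (a.1 - b.1) := by
              rw [← Finset.sum_mul]
        _ = (M - 1) * nT 0 (a.1 - b.1) := by rw [hM]; ring_nf
      have hfin : (M - 1) * nT 0 (a.1 - b.1) < ε := by
        have hle : (M - 1) * nT 0 (a.1 - b.1) ≤ (M - 1) * (ε/M) :=
          mul_le_mul_of_nonneg_left h1.le (by linarith)
        have hlt : (M - 1) * (ε/M) < ε := by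
          have h7 : (M - 1) * (ε/M) = ((M-1)/M) * ε := by ring
          have h8 : (M-1)/M < 1 := (div_lt_one hM0).mpr (by linarith)
          rw [h7]
          nlinarith
        exact lt_of_le_of_lt hle hlt
      rw [Real.dist_eq]
      calc |nX k (∑ i ∈ Finset.range N, a.1 i • fseq i) -
          nX k (∑ i ∈ Finset.range N, b.1 i • fseq i)| ≤
          nX k ((∑ i ∈ Finset.range N, a.1 i • fseq i) -
            ∑ i ∈ Finset.range N, b.1 i • fseq i) := hkey
      _ = nX k (∑ i ∈ Finset.range N, (a.1 i - b.1 i) • fseq i) := by rw [hSdiff]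
      _ ≤ ∑ i ∈ Finset.range N, |a.1 i - b.1 i| * nX k (fseq i) := h4
      _ ≤ (M - 1) * nT 0 (a.1 - b.1) := h5
      _ < ε := hfin
    set Fs : ℕ → Set (ThetaF memT) := fun n =>
      {c | ∀ N, nX k (∑ i ∈ Finset.range N, c.1 i • fseq i) ≤ (n:ℝ)} with hFs
    have hclosed : ∀ n, IsClosed (Fs n) := by
      intro n
      have heq : Fs n = ⋂ N, (fun c : ThetaF memT =>
          nX k (∑ i ∈ Finset.range N, c.1 i • fseq i)) ⁻¹' Set.Iic (n:ℝ) := by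
        ext c
        simp [hFs, Set.mem_iInter]
      rw [heq]
      exact isClosed_iInter fun N => (isClosed_Iic).preimage (hcont N)
    have hcover : ⋃ n, Fs n = Set.univ := by
      apply Set.eq_univ_of_forall
      intro c
      simp only [Set.mem_iUnion]
      obtain ⟨x, hx⟩ := hconv c.1 c.2
      obtain ⟨b, hb⟩ := (hx k).bddAbove_range
      obtain ⟨n, hn⟩ := exists_nat_ge (nX k x + b)
      refine ⟨n, fun N => ?_⟩
      have h1 : nX k (∑ i ∈ Finset.range N, c.1 i • fseq i) ≤ nX k x +
          nX k ((∑ i ∈ Finset.range N, c.1 i • fseq i) - x) :=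
        isnorm_le_add (hnX k) _ _
      have h2 : nX k ((∑ i ∈ Finset.range N, c.1 i • fseq i) - x) =
          nX k (x - ∑ i ∈ Finset.range N, c.1 i • fseq i) := by
        rw [← isnorm_neg (hnX k), neg_sub]
      have h3 : nX k (x - ∑ i ∈ Finset.range N, c.1 i • fseq i) ≤ b := hb ⟨N, rfl⟩
      have hc : c ∈ Fs n → True := fun _ => trivial
      show nX k (∑ i ∈ Finset.range N, c.1 i • fseq i) ≤ (n:ℝ)
      linarith
    haveI : Nonempty (ThetaF memT) := ⟨⟨0, fun t => hT0 t⟩⟩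
    obtain ⟨n, hne⟩ := nonempty_interior_of_iUnion_of_closed hclosed hcover
    obtain ⟨c₀, hc₀⟩ := hne
    obtain ⟨r, hr, hball⟩ := Metric.isOpen_iff.mp isOpen_interior c₀ hc₀
    have hball' : ∀ a, dist a c₀ < r → a ∈ Fs n := fun a ha => interior_subset (hball ha)
    obtain ⟨p, hp⟩ := exists_pow_lt_of_lt_one (show (0:ℝ) < r/2 by linarith)
      (show (1/2:ℝ) < 1 by norm_num)
    have hsmall : ∀ u : ℕ → ℝ, (∀ t, memT t u) → Dd nT u < r → ∀ N,
        nX k (∑ i ∈ Finset.range N, u i • fseq i) ≤ 2*(n:ℝ) := by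
      intro u hu hDu N
      have hwmem : ∀ t, memT t (c₀.1 + u) := fun t => hTadd t _ _ (c₀.2 t) (hu t)
      have hw : dist (⟨c₀.1 + u, hwmem⟩ : ThetaF memT) c₀ < r := by
        show Dd nT (c₀.1 + u - c₀.1) < r
        simpa [add_sub_cancel_left] using hDu
      have h2 := hball' _ hw N
      have h3 := hball' c₀ (by rw [dist_self]; exact hr) N
      have hSw : ∑ i ∈ Finset.range N, (c₀.1 + u) i • fseq i =
          (∑ i ∈ Finset.range N, c₀.1 i • fseq i) + ∑ i ∈ Finset.range N, u i • fseq i := by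
        rw [← Finset.sum_add_distrib]
        exact Finset.sum_congr rfl fun i _ => by simp [add_smul]
      have h4 : nX k (∑ i ∈ Finset.range N, u i • fseq i) ≤
          nX k (∑ i ∈ Finset.range N, (c₀.1 + u) i • fseq i) +
          nX k (∑ i ∈ Finset.range N, c₀.1 i • fseq i) := by
        have h5 := isnorm_sub_le (hnX k) (∑ i ∈ Finset.range N, (c₀.1 + u) i • fseq i)
          (∑ i ∈ Finset.range N, c₀.1 i • fseq i)
        rw [hSw, add_sub_cancel_left] at h5
        rw [hSw]
        exact h5
      have h2' : nX k (∑ i ∈ Finset.range N, (c₀.1 + u) i • fseq i) ≤ (n:ℝ) := h2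
      have h3' : nX k (∑ i ∈ Finset.range N, c₀.1 i • fseq i) ≤ (n:ℝ) := h3
      linarith
    set C : ℝ := (16*(n:ℝ)+16)/r + 1 with hCdef
    have hCpos : 0 < C := by positivity
    have hbound : ∀ (c : ℕ → ℝ), (∀ t, memT t c) → ∀ N,
        nX k (∑ i ∈ Finset.range N, c i • fseq i) ≤ C * nT p c := by
      intro c hc N
      rcases eq_or_lt_of_le ((hnT p).1 c) with h0 | h0
      · -- nT p c = 0
        have hz : ∀ m : ℕ, (m:ℝ) * nX k (∑ i ∈ Finset.range N, c i • fseq i) ≤ 2*(n:ℝ) := by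
          intro m
          have hmem : ∀ t, memT t ((m:ℝ) • c) := fun t => hTsmul t _ _ (hc t)
          have hnTm : nT p ((m:ℝ) • c) = 0 := by
            rw [(hnT p).2.2.1, ← h0, mul_zero]
          have hD : Dd nT ((m:ℝ) • c) < r := by
            have h5 := Dd_le_bound hnT hmonoT ((m:ℝ) • c) p
            rw [hnTm] at h5
            linarith
          have h6 := hsmall _ hmem hD N
          have hSm : ∑ i ∈ Finset.range N, ((m:ℝ) • c) i • fseq i =
              (m:ℝ) • ∑ i ∈ Finset.range N, c i • fseq i := by
            rw [Finset.smul_sum]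
            exact Finset.sum_congr rfl fun i _ => by simp [smul_smul]
          rw [hSm, (hnX k).2.2.1, abs_of_nonneg (Nat.cast_nonneg m)] at h6
          exact h6
        have hle0 : nX k (∑ i ∈ Finset.range N, c i • fseq i) ≤ 0 := by
          by_contra hcon
          push_neg at hcon
          obtain ⟨m, hm⟩ := exists_nat_gt
            ((2*(n:ℝ)) / nX k (∑ i ∈ Finset.range N, c i • fseq i))
          have h7 := hz m
          have h8 : (2*(n:ℝ)) < (m:ℝ) * nX k (∑ i ∈ Finset.range N, c i • fseq i) :=
            (div_lt_iff₀ hcon).mp hm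
          linarith
        have h9 := (hnX k).1 (∑ i ∈ Finset.range N, c i • fseq i)
        have hXz : nX k (∑ i ∈ Finset.range N, c i • fseq i) = 0 := le_antisymm hle0 h9
        rw [hXz, ← h0, mul_zero]
      · -- 0 < nT p c
        set a : ℝ := (r/8) / nT p c with ha
        have ha0 : 0 < a := by positivity
        have hmem : ∀ t, memT t (a • c) := fun t => hTsmul t _ _ (hc t)
        have hnTa : nT p (a • c) = r/8 := by
          rw [(hnT p).2.2.1, abs_of_pos ha0, ha]
          field_simp
        have hD : Dd nT (a • c) < r := by
          have h5 := Dd_le_bound hnT hmonoT (a • c) p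
          rw [hnTa] at h5
          linarith
        have hs := hsmall _ hmem hD N
        have hSa : ∑ i ∈ Finset.range N, (a • c) i • fseq i =
            a • ∑ i ∈ Finset.range N, c i • fseq i := by
          rw [Finset.smul_sum]
          exact Finset.sum_congr rfl fun i _ => by simp [smul_smul]
        rw [hSa, (hnX k).2.2.1, abs_of_pos ha0] at hs
        have h6 : nX k (∑ i ∈ Finset.range N, c i • fseq i) ≤ (2*(n:ℝ)) / a := by
          rw [le_div_iff₀ ha0]
          linarith [hs]
        have h7 : (2*(n:ℝ))/a = (16*(n:ℝ)/r) * nT p c := by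
          rw [ha]
          field_simp
          ring
        have h8 : (16*(n:ℝ)/r) * nT p c ≤ C * nT p c := by
          refine mul_le_mul_of_nonneg_right ?_ ((hnT p).1 c)
          rw [hCdef]
          have h9 : 16*(n:ℝ)/r ≤ (16*(n:ℝ)+16)/r := by gcongr <;> linarith
          linarith
        exact (h6.trans h7.le).trans h8
    refine ⟨p, C, hCpos, fun c hc => ?_⟩
    rw [hVP c hc]
    apply le_of_forall_pos_le_add
    intro ε hε
    have hev := (Lspec c hc k).eventually_lt_const hε
    obtain ⟨N, hN⟩ := eventually_atTop.mp hev
    have h1 : nX k (L c) ≤ nX k (∑ i ∈ Finset.range N, c i • fseq i) +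
        nX k (L c - ∑ i ∈ Finset.range N, c i • fseq i) := isnorm_le_add (hnX k) _ _
    have h2 := hbound c hc N
    have h3 : nX k (L c - ∑ i ∈ Finset.range N, c i • fseq i) < ε := hN N le_rfl
    linarith
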